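/- arXiv:0906.4321 — 3 statements merged into one kernel-verified Lean document; each statement's English description precedes it below -/
import Mathlib

section
/- (Finite sets are acceptable) If Φ is countably infinite and Γ is a finite set of sentences, then Γ is acceptable with respect to every subset L ⊆ Φ containing infinitely many primitive propositions: whenever φ is a formula over L with one free variable x and Γ ⊢ φ[x/q] for all but finitely many primitive propositions q ∈ L, then Γ ⊢ ∀x φ. -/
namespace AwarenessPaper

inductive Fm : Type
  | prop : ℕ → Fm
  | var  : ℕ → Fm
  | neg  : Fm → Fm
  | and  : Fm → Fm → Fm
  | k    : ℕ → Fm → Fm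
  | a    : ℕ → Fm → Fm
  | x    : ℕ → Fm → Fm
  | all  : ℕ → Fm → Fm

namespace Fm

def props : Fm → Set ℕ
  | .prop p => {p}
  | .var _ => ∅
  | .neg φ => props φ
  | .and φ ψ => props φ ∪ props ψ
  | .k _ φ => props φ
  | .a _ φ => props φ
  | .x _ φ => props φ
  | .all _ φ => props φ

def free : Fm → Set ℕ
  | .prop _ => ∅
  | .var v => {v}
  | .neg φ => free φ
  | .and φ ψ => free φ ∪ free ψ
  | .k _ φ => free φ
  | .a _ φ => free φ
  | .x _ φ => free φ
  | .all v φ => free φ \ {v}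

def qcount : Fm → ℕ
  | .prop _ => 0
  | .var _ => 0
  | .neg φ => qcount φ
  | .and φ ψ => max (qcount φ) (qcount ψ)
  | .k _ φ => qcount φ
  | .a _ φ => qcount φ
  | .x _ φ => qcount φ
  | .all _ φ => qcount φ + 1

def substV (v : ℕ) (ψ : Fm) : Fm → Fm
  | .prop p => .prop p
  | .var u => if u = v then ψ else .var u
  | .neg φ => .neg (substV v ψ φ)
  | .and φ₁ φ₂ => .and (substV v ψ φ₁) (substV v ψ φ₂)
  | .k i φ => .k i (substV v ψ φ)
  | .a i φ => .a i (substV v ψ φ)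
  | .x i φ => .x i (substV v ψ φ)
  | .all u φ => if u = v then .all u φ else .all u (substV v ψ φ)

def substP (q : ℕ) (ψ : Fm) : Fm → Fm
  | .prop p => if p = q then ψ else .prop p
  | .var u => .var u
  | .neg φ => .neg (substP q ψ φ)
  | .and φ₁ φ₂ => .and (substP q ψ φ₁) (substP q ψ φ₂)
  | .k i φ => .k i (substP q ψ φ)
  | .a i φ => .a i (substP q ψ φ)
  | .x i φ => .x i (substP q ψ φ)
  | .all u φ => .all u (substP q ψ φ)

/-- Primitive propositions of a formula, as a list. -/
def propList : Fm → List ℕ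
  | .prop p => [p]
  | .var _ => []
  | .neg φ => propList φ
  | .and φ ψ => propList φ ++ propList ψ
  | .k _ φ => propList φ
  | .a _ φ => propList φ
  | .x _ φ => propList φ
  | .all _ φ => propList φ

def or (φ ψ : Fm) : Fm := .neg (.and (.neg φ) (.neg ψ))
def imp (φ ψ : Fm) : Fm := Fm.or (.neg φ) ψ
def iff (φ ψ : Fm) : Fm := .and (imp φ ψ) (imp ψ φ)
def top : Fm := Fm.or (.prop 0) (.neg (.prop 0))
def bot : Fm := .neg top

/-- Boolean evaluation of the propositional skeleton of a formula, treating
everything other than `¬` and `∧` as an atom.  `∀ v, beval v φ = true` says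
exactly that `φ` is a substitution instance of a propositional tautology. -/
def beval (v : Fm → Bool) : Fm → Bool
  | .neg φ => ! beval v φ
  | .and φ ψ => beval v φ && beval v ψ
  | φ => v φ

end Fm

/-- Conjunction of a list of formulas (the empty conjunction is `⊤`). -/
def conj : List Fm → Fm
  | [] => Fm.top
  | φ :: l => Fm.and φ (conj l)

/-- The theorems of the axiom system `AX^{X,A,∀}_e`:
Prop, AGPP, XA, FA*_X, K_X, A0_X, 1_∀, K_∀, N_∀, Barcan*_X, MP, Gen_X, Gen_∀. -/
inductive Thm : Fm → Prop
  | taut (φ : Fm) (h : ∀ v : Fm → Bool, Fm.beval v φ = true) : Thm φ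
  | agppAx (i : ℕ) (φ : Fm) :
      Thm (Fm.iff (.a i φ) (conj ((Fm.propList φ).map fun p => Fm.a i (.prop p))))
  | xaAx (i : ℕ) (φ : Fm) : Thm (Fm.imp (.a i φ) (.x i (.a i φ)))
  | faAx (i x : ℕ) :
      Thm (Fm.imp (.all x (.neg (.a i (.var x)))) (.x i (.all x (.neg (.a i (.var x))))))
  | kAx (i : ℕ) (φ ψ : Fm) :
      Thm (Fm.imp (.and (.x i φ) (.x i (Fm.imp φ ψ))) (.x i ψ))
  | a0Ax (i : ℕ) (φ : Fm) : Thm (Fm.imp (.x i φ) (.a i φ))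
  | oneAll (x : ℕ) (φ ψ : Fm) (h1 : Fm.qcount ψ = 0) (h2 : Fm.free ψ = ∅) :
      Thm (Fm.imp (.all x φ) (Fm.substV x ψ φ))
  | kAll (x : ℕ) (φ ψ : Fm) :
      Thm (Fm.imp (.all x (Fm.imp φ ψ)) (Fm.imp (.all x φ) (.all x ψ)))
  | nAll (x : ℕ) (φ : Fm) (h : x ∉ Fm.free φ) : Thm (Fm.imp φ (.all x φ))
  | barcanAx (i x : ℕ) (φ : Fm) :
      Thm (Fm.imp (.and (.a i (.all x φ)) (.all x (Fm.imp (.a i (.var x)) (.x i φ))))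
                  (.x i (Fm.imp (.all x (.a i (.var x))) (.all x φ))))
  | mp (φ ψ : Fm) : Thm (Fm.imp φ ψ) → Thm φ → Thm ψ
  | genX (i : ℕ) (φ : Fm) : Thm φ → Thm (Fm.imp (.a i φ) (.x i φ))
  | genAll (x q : ℕ) (φ : Fm) : Thm φ → Thm (.all x (Fm.substP q (.var x) φ))

/-- `Γ ⊢ φ`: derivable from finitely many members of `Γ` and theorems of
`AX^{X,A,∀}_e` by modus ponens. -/
def Derivable (Γ : Set Fm) (φ : Fm) : Prop :=
  ∃ l : List Fm, (∀ ψ ∈ l, ψ ∈ Γ) ∧ Thm (Fm.imp (conj l) φ)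

def Consistent (Γ : Set Fm) : Prop := ¬ Derivable Γ Fm.bot

/-- `Γ` is acceptable with respect to `L`: whenever `φ` is a formula over `L`
with (at most) the free variable `x` and `Γ ⊢ φ[x/q]` for all but finitely many
primitive propositions `q ∈ L`, then `Γ ⊢ ∀x φ`. -/
def Acceptable (Γ : Set Fm) (L : Set ℕ) : Prop :=
  ∀ (x : ℕ) (φ : Fm), Fm.props φ ⊆ L → Fm.free φ ⊆ {x} →
    {q ∈ L | ¬ Derivable Γ (Fm.substV x (.prop q) φ)}.Finite →
    Derivable Γ (.all x φ)

/-- `Γ` is a maximal consistent set of sentences with respect to `L`. -/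
def MaxConsistent (Γ : Set Fm) (L : Set ℕ) : Prop :=
  (∀ φ ∈ Γ, Fm.props φ ⊆ L ∧ Fm.free φ = ∅) ∧ Consistent Γ ∧
    ∀ φ : Fm, Fm.props φ ⊆ L → Fm.free φ = ∅ → Consistent (insert φ Γ) → φ ∈ Γ


namespace Fm

lemma props_finite : ∀ φ : Fm, (props φ).Finite
  | .prop p => Set.finite_singleton p
  | .var _ => Set.finite_empty
  | .neg φ => props_finite φ
  | .and φ ψ => (props_finite φ).union (props_finite ψ)
  | .k _ φ => props_finite φ
  | .a _ φ => props_finite φ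
  | .x _ φ => props_finite φ
  | .all _ φ => props_finite φ

lemma substP_id (q : ℕ) (ψ : Fm) : ∀ φ : Fm, q ∉ props φ → substP q ψ φ = φ := by
  intro φ
  induction φ with
  | prop p => intro h; simp [props] at h; simp [substP, Ne.symm h]
  | var u => intro _; simp [substP]
  | neg φ ih => intro h; simp [props] at h; simp [substP, ih h]
  | and φ₁ φ₂ ih1 ih2 =>
      intro h; simp [props] at h; simp [substP, ih1 h.1, ih2 h.2]
  | k i φ ih => intro h; simp [props] at h; simp [substP, ih h]
  | a i φ ih => intro h; simp [props] at h; simp [substP, ih h]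
  | x i φ ih => intro h; simp [props] at h; simp [substP, ih h]
  | all u φ ih => intro h; simp [props] at h; simp [substP, ih h]

lemma substP_substV (q y : ℕ) :
    ∀ φ : Fm, q ∉ props φ → substP q (.var y) (substV y (.prop q) φ) = φ := by
  intro φ
  induction φ with
  | prop p => intro h; simp [props] at h; simp [substV, substP, Ne.symm h]
  | var u =>
      intro _
      by_cases hu : u = y
      · subst hu; simp [substV, substP]
      · simp [substV, hu, substP]
  | neg φ ih => intro h; simp [props] at h; simp [substV, substP, ih h]
  | and φ₁ φ₂ ih1 ih2 =>
      intro h; simp [props] at h; simp [substV, substP, ih1 h.1, ih2 h.2]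
  | k i φ ih => intro h; simp [props] at h; simp [substV, substP, ih h]
  | a i φ ih => intro h; simp [props] at h; simp [substV, substP, ih h]
  | x i φ ih => intro h; simp [props] at h; simp [substV, substP, ih h]
  | all u φ ih =>
      intro h; simp [props] at h
      by_cases hu : u = y
      · subst hu; simp [substV, substP, substP_id q (Fm.var u) φ h]
      · simp [substV, hu, substP, ih h]

end Fm

lemma thm_trans {A B C : Fm} (h1 : Thm (Fm.imp A B)) (h2 : Thm (Fm.imp B C)) :
    Thm (Fm.imp A C) := by
  have ht : Thm (Fm.imp (Fm.imp A B) (Fm.imp (Fm.imp B C) (Fm.imp A C))) := by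
    apply Thm.taut
    intro v
    simp [Fm.imp, Fm.or, Fm.beval]
    cases Fm.beval v A <;> cases Fm.beval v B <;> cases Fm.beval v C <;> simp
  exact Thm.mp _ _ (Thm.mp _ _ ht h1) h2

lemma conj_free (l : List Fm) (h : ∀ ψ ∈ l, Fm.free ψ = ∅) :
    Fm.free (conj l) = ∅ := by
  induction l with
  | nil => simp [conj, Fm.top, Fm.or, Fm.free]
  | cons φ l ih =>
      simp only [conj, Fm.free]
      rw [h φ (by simp), ih (fun ψ hψ => h ψ (by simp [hψ]))]
      simp

lemma conj_props (q : ℕ) (l : List Fm) (h0 : q ≠ 0) (h : ∀ ψ ∈ l, q ∉ Fm.props ψ) :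
    q ∉ Fm.props (conj l) := by
  induction l with
  | nil => simp [conj, Fm.top, Fm.or, Fm.props, h0]
  | cons φ l ih =>
      simp only [conj, Fm.props, Set.mem_union, not_or]
      exact ⟨h φ (by simp), ih (fun ψ hψ => h ψ (by simp [hψ]))⟩

/-- Finite sets of sentences are acceptable with respect to every infinite `L ⊆ Φ`. -/
theorem stmt15 (Γ : Set Fm) (hfin : Γ.Finite) (hsent : ∀ φ ∈ Γ, Fm.free φ = ∅)
    (L : Set ℕ) (hL : L.Infinite) :
    Acceptable Γ L := by
  intro x φ hprops hfree hbad
  -- choose a fresh q ∈ L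
  have hFfin : (({q ∈ L | ¬ Derivable Γ (Fm.substV x (.prop q) φ)} ∪ Fm.props φ ∪
      (⋃ ψ ∈ Γ, Fm.props ψ) ∪ {0}) : Set ℕ).Finite := by
    refine (((hbad.union (Fm.props_finite φ)).union ?_).union (Set.finite_singleton 0))
    exact hfin.biUnion fun ψ _ => Fm.props_finite ψ
  obtain ⟨q, hqL⟩ := (hL.diff hFfin).nonempty
  obtain ⟨hqL, hqF⟩ := hqL
  simp only [Set.mem_union, Set.mem_singleton_iff, Set.mem_setOf_eq, not_or, Set.mem_iUnion,
    not_exists] at hqF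
  obtain ⟨⟨⟨hq1, hq2⟩, hq3⟩, hq4⟩ := hqF
  have hder : Derivable Γ (Fm.substV x (.prop q) φ) := by
    by_contra hc; exact hq1 ⟨hqL, hc⟩
  obtain ⟨l, hl, hthm⟩ := hder
  refine ⟨l, hl, ?_⟩
  have hqφ : q ∉ Fm.props φ := hq2
  have hqconj : q ∉ Fm.props (conj l) := by
    refine conj_props q l hq4 fun ψ hψ => ?_
    have := hq3 ψ
    exact this (hl ψ hψ)
  -- Gen_∀
  have hgen := Thm.genAll x q _ hthm
  have heq : Fm.substP q (.var x) (Fm.imp (conj l) (Fm.substV x (.prop q) φ)) =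
      Fm.imp (conj l) φ := by
    simp only [Fm.imp, Fm.or, Fm.substP]
    rw [Fm.substP_id q _ _ hqconj, Fm.substP_substV q x φ hqφ]
  rw [heq] at hgen
  -- K_∀ and N_∀
  have hk := Thm.mp _ _ (Thm.kAll x (conj l) φ) hgen
  have hfreec : Fm.free (conj l) = ∅ := conj_free l fun ψ hψ => hsent ψ (hl ψ hψ)
  have hn : Thm (Fm.imp (conj l) (.all x (conj l))) :=
    Thm.nAll x (conj l) (by rw [hfreec]; exact Set.notMem_empty x)
  exact thm_trans hn hk

end AwarenessPaper
end

section
/- (Acceptability is preserved by adding a sentence) If Γ is acceptable with respect to L and τ is a sentence over L, then Γ ∪ {τ} is acceptable with respect to L. -/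
namespace AwarenessPaper

section Aux

open Fm

lemma beval_imp (v : Fm → Bool) (a b : Fm) :
    Fm.beval v (Fm.imp a b) = (!Fm.beval v a || Fm.beval v b) := by
  simp [Fm.imp, Fm.or, Fm.beval]

lemma beval_top (v : Fm → Bool) : Fm.beval v Fm.top = true := by
  simp [Fm.top, Fm.or, Fm.beval]

lemma beval_conj (v : Fm → Bool) (l : List Fm) :
    Fm.beval v (conj l) = l.all (fun ψ => Fm.beval v ψ) := by
  induction l with
  | nil => simp [conj, beval_top]
  | cons a l ih => simp [conj, Fm.beval, ih]

lemma derivable_of_thm {Γ : Set Fm} {φ : Fm} (h : Thm φ) : Derivable Γ φ := by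
  refine ⟨[], by simp, ?_⟩
  have t : Thm (Fm.imp φ (Fm.imp (conj []) φ)) := by
    apply Thm.taut
    intro v
    simp [beval_imp]
    cases Fm.beval v φ <;> simp
  exact Thm.mp _ _ t h

lemma derivable_mem {Γ : Set Fm} {φ : Fm} (h : φ ∈ Γ) : Derivable Γ φ := by
  refine ⟨[φ], by simpa using h, ?_⟩
  apply Thm.taut
  intro v
  simp [beval_imp, conj, Fm.beval]
  cases Fm.beval v φ <;> simp

lemma derivable_mp {Γ : Set Fm} {φ ψ : Fm}
    (h1 : Derivable Γ (Fm.imp φ ψ)) (h2 : Derivable Γ φ) : Derivable Γ ψ := by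
  obtain ⟨l1, hl1, t1⟩ := h1
  obtain ⟨l2, hl2, t2⟩ := h2
  refine ⟨l1 ++ l2, ?_, ?_⟩
  · intro χ hχ
    rcases List.mem_append.mp hχ with h | h
    · exact hl1 χ h
    · exact hl2 χ h
  · have t3 : Thm (Fm.imp (Fm.imp (conj l1) (Fm.imp φ ψ))
        (Fm.imp (Fm.imp (conj l2) φ) (Fm.imp (conj (l1 ++ l2)) ψ))) := by
      apply Thm.taut
      intro v
      simp only [beval_imp, beval_conj, List.all_append]
      cases h1 : (l1.all fun χ => Fm.beval v χ) <;>
        cases h2 : (l2.all fun χ => Fm.beval v χ) <;>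
        cases Fm.beval v φ <;> cases Fm.beval v ψ <;> simp
    exact Thm.mp _ _ (Thm.mp _ _ t3 t1) t2

lemma derivable_mono {Γ Γ' : Set Fm} (h : Γ ⊆ Γ') {φ : Fm}
    (hd : Derivable Γ φ) : Derivable Γ' φ := by
  obtain ⟨l, hl, t⟩ := hd
  exact ⟨l, fun ψ hψ => h (hl ψ hψ), t⟩

lemma deduction {Γ : Set Fm} {τ φ : Fm}
    (h : Derivable (insert τ Γ) φ) : Derivable Γ (Fm.imp τ φ) := by
  classical
  obtain ⟨l, hl, t⟩ := h
  refine ⟨l.filter (fun ψ => decide (ψ ∈ Γ)), ?_, ?_⟩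
  · intro ψ hψ
    have := List.mem_filter.mp hψ
    exact of_decide_eq_true this.2
  · have key : Thm (Fm.imp (Fm.and τ (conj (l.filter (fun ψ => decide (ψ ∈ Γ))))) (conj l)) := by
      apply Thm.taut
      intro v
      simp only [beval_imp, beval_conj, Fm.beval]
      by_cases hτ : Fm.beval v τ = true
      · by_cases hc : (l.filter (fun ψ => decide (ψ ∈ Γ))).all (fun ψ => Fm.beval v ψ) = true
        · have : l.all (fun ψ => Fm.beval v ψ) = true := by
            rw [List.all_eq_true] at hc ⊢
            intro ψ hψ
            rcases hl ψ hψ with heq | hmem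
            · rw [heq]; exact hτ
            · exact hc ψ (List.mem_filter.mpr ⟨hψ, decide_eq_true hmem⟩)
          simp [hτ, hc, this]
        · simp at hc
          simp [hc]
      · simp at hτ
        simp [hτ]
    have comb : Thm (Fm.imp (Fm.imp (Fm.and τ (conj (l.filter (fun ψ => decide (ψ ∈ Γ))))) (conj l))
        (Fm.imp (Fm.imp (conj l) φ)
          (Fm.imp (conj (l.filter (fun ψ => decide (ψ ∈ Γ)))) (Fm.imp τ φ)))) := by
      apply Thm.taut
      intro v
      simp only [beval_imp, Fm.beval]
      cases Fm.beval v τ <;> cases Fm.beval v (conj l) <;>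
        cases Fm.beval v (conj (l.filter (fun ψ => decide (ψ ∈ Γ)))) <;>
        cases Fm.beval v φ <;> simp
    exact Thm.mp _ _ (Thm.mp _ _ comb key) t

lemma substV_of_not_free {x : ℕ} {χ : Fm} (ψ : Fm) (h : x ∉ Fm.free ψ) :
    Fm.substV x χ ψ = ψ := by
  induction ψ with
  | prop p => simp [Fm.substV]
  | var u =>
    simp [Fm.free] at h
    simp [Fm.substV, Ne.symm h]
  | neg φ ih => simp [Fm.free] at h; simp [Fm.substV, ih h]
  | and φ₁ φ₂ ih1 ih2 =>
    simp [Fm.free] at h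
    simp [Fm.substV, ih1 h.1, ih2 h.2]
  | k i φ ih => simp [Fm.free] at h; simp [Fm.substV, ih h]
  | a i φ ih => simp [Fm.free] at h; simp [Fm.substV, ih h]
  | x i φ ih => simp [Fm.free] at h; simp [Fm.substV, ih h]
  | all u φ ih =>
    by_cases hu : u = x
    · simp [Fm.substV, hu]
    · simp [Fm.free, hu] at h
      simp [Fm.substV, hu, ih (fun hx => hu ((h hx).symm))]

end Aux

/-- Acceptability is preserved by adding a sentence over `L`. -/
theorem stmt16 (Γ : Set Fm) (L : Set ℕ) (hΓ : Acceptable Γ L)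
    (τ : Fm) (hτs : Fm.free τ = ∅) (hτL : Fm.props τ ⊆ L) :
    Acceptable (insert τ Γ) L := by
  intro x φ hp hf hfin
  have hτfree : ∀ y, y ∉ Fm.free τ := by simp [hτs]
  have hsub : ∀ q : ℕ, Fm.substV x (.prop q) (Fm.imp τ φ) =
      Fm.imp τ (Fm.substV x (.prop q) φ) := by
    intro q
    simp [Fm.imp, Fm.or, Fm.substV, substV_of_not_free τ (hτfree x)]
  have hΓd : Derivable Γ (.all x (Fm.imp τ φ)) := by
    apply hΓ x (Fm.imp τ φ)
    · intro p hp'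
      simp [Fm.imp, Fm.or, Fm.props] at hp'
      rcases hp' with h | h
      · exact hτL h
      · exact hp h
    · intro y hy
      simp [Fm.imp, Fm.or, Fm.free, hτs] at hy
      exact hf hy
    · apply hfin.subset
      rintro q ⟨hqL, hq⟩
      refine ⟨hqL, fun hd => hq ?_⟩
      rw [hsub]
      exact deduction hd
  have h1 : Derivable (insert τ Γ) (.all x (Fm.imp τ φ)) :=
    derivable_mono (Set.subset_insert _ _) hΓd
  have h2 : Derivable (insert τ Γ) (Fm.imp (.all x τ) (.all x φ)) :=
    derivable_mp (derivable_of_thm (Thm.kAll x τ φ)) h1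
  have h3 : Derivable (insert τ Γ) (.all x τ) :=
    derivable_mp (derivable_of_thm (Thm.nAll x τ (hτfree x)))
      (derivable_mem (Set.mem_insert _ _))
  exact derivable_mp h2 h3

end AwarenessPaper
end

section
/- (A_i* validates Gen*) In any extended awareness structure, if φ is a formula that is true at every world of M at which it is defined (i.e., at which its primitive propositions are in the local language), then A_i*φ ⇒ K_iφ is true at every world at which it is defined, where A_i*φ = K_i(φ ∨ ¬φ). -/
namespace AwarenessPaper

namespace Fm

/-- All variables occurring in a formula (free or bound). -/
def vars : Fm → Set ℕ
  | .prop _ => ∅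
  | .var v => {v}
  | .neg φ => vars φ
  | .and φ ψ => vars φ ∪ vars ψ
  | .k _ φ => vars φ
  | .a _ φ => vars φ
  | .x _ φ => vars φ
  | .all v φ => insert v (vars φ)

/-- Rename primitive propositions along `τ`. -/
def rename (τ : ℕ → ℕ) : Fm → Fm
  | .prop p => .prop (τ p)
  | .var u => .var u
  | .neg φ => .neg (rename τ φ)
  | .and φ₁ φ₂ => .and (rename τ φ₁) (rename τ φ₂)
  | .k i φ => .k i (rename τ φ)
  | .a i φ => .a i (rename τ φ)
  | .x i φ => .x i (rename τ φ)
  | .all u φ => .all u (rename τ φ)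

/-- `A_i^* φ`, an abbreviation for `K_i (φ ∨ ¬φ)`. -/
def astar (i : ℕ) (φ : Fm) : Fm := .k i (Fm.or φ (.neg φ))

end Fm

/-- An extended awareness structure for agents `ℕ` over `Φ = ℕ`, with set of worlds `W`:
each world has a nonempty local language `L s`, a valuation, possibility relations `R i`,
and awareness sets `Aw i s` consisting of formulas over the local language. -/
structure EAS (W : Type) where
  L : W → Set ℕ
  L_ne : ∀ s, (L s).Nonempty
  val : W → ℕ → Bool
  R : ℕ → W → W → Prop
  Aw : ℕ → W → Set Fm
  Aw_lang : ∀ i s, ∀ φ ∈ Aw i s, Fm.props φ ⊆ L s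

namespace EAS

variable {W : Type}

/-- One level of the truth definition; `univ` interprets the bodies of quantifiers
(at one lower quantifier depth).  A formula is true at `s` only if its primitive
propositions all belong to the local language `L s`. -/
def satAux (M : EAS W) (univ : W → Fm → Prop) : W → Fm → Prop
  | s, .prop p => p ∈ M.L s ∧ M.val s p = true
  | _, .var _ => False
  | s, .neg φ => Fm.props φ ⊆ M.L s ∧ ¬ satAux M univ s φ
  | s, .and φ ψ => satAux M univ s φ ∧ satAux M univ s ψ
  | s, .k i φ => Fm.props φ ⊆ M.L s ∧ ∀ t, M.R i s t → satAux M univ t φ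
  | s, .a i φ => φ ∈ M.Aw i s
  | s, .x i φ => (Fm.props φ ⊆ M.L s ∧ ∀ t, M.R i s t → satAux M univ t φ) ∧ φ ∈ M.Aw i s
  | s, .all v φ => Fm.props φ ⊆ M.L s ∧
      ∀ β : Fm, Fm.qcount β = 0 → Fm.free β = ∅ → Fm.props β ⊆ M.L s →
        univ s (Fm.substV v β φ)

/-- Truth with quantifier-depth budget `n`. -/
def satN (M : EAS W) : ℕ → W → Fm → Prop
  | 0 => M.satAux fun _ _ => False
  | n + 1 => M.satAux (M.satN n)

/-- `(M,s) ⊨ φ`. Quantifiers range over quantifier-free sentences of the local language. -/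
def sat (M : EAS W) (s : W) (φ : Fm) : Prop := M.satN (Fm.qcount φ) s φ

/-- Awareness is generated by primitive propositions. -/
def agpp (M : EAS W) : Prop :=
  ∀ i s (φ : Fm), φ ∈ M.Aw i s ↔ ∀ p ∈ Fm.props φ, Fm.prop p ∈ M.Aw i s

/-- Agents know what they are aware of. -/
def ka (M : EAS W) : Prop := ∀ i s t, M.R i s t → M.Aw i s = M.Aw i t

end EAS

/-- (Weak) validity in the class `𝒩_n(Φ,𝒳)` of all extended awareness structures
satisfying agpp and ka: truth at every world whose local language contains all the
primitive propositions of the formula. -/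
def Valid (φ : Fm) : Prop :=
  ∀ (W : Type) (M : EAS W), M.agpp → M.ka → ∀ s : W, Fm.props φ ⊆ M.L s → M.sat s φ


lemma key19 {W : Type} (M : EAS W) (univ : W → Fm → Prop) (i : ℕ) (φ : Fm)
    (h : ∀ t : W, Fm.props φ ⊆ M.L t → M.satAux univ t φ) :
    ∀ s : W, Fm.props φ ⊆ M.L s →
      M.satAux univ s (Fm.imp (Fm.astar i φ) (.k i φ)) := by
  intro s hs
  have hprops : Fm.props (Fm.imp (Fm.astar i φ) (.k i φ)) = Fm.props φ := by
    simp [Fm.imp, Fm.or, Fm.astar, Fm.props]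
  refine ⟨by rw [show Fm.props (Fm.and (Fm.neg (Fm.neg (Fm.astar i φ)))
      (Fm.neg (Fm.k i φ))) = Fm.props φ by
      simp [Fm.astar, Fm.or, Fm.props]]; exact hs, ?_⟩
  rintro ⟨⟨_, hnnA⟩, ⟨_, hnB⟩⟩
  have hA : M.satAux univ s (Fm.astar i φ) := by
    by_contra hc
    exact hnnA ⟨by simpa [Fm.astar, Fm.or, Fm.props] using hs, hc⟩
  obtain ⟨_, hAk⟩ := hA
  apply hnB
  refine ⟨hs, fun t hRt => ?_⟩
  have := hAk t hRt
  obtain ⟨hlt, _⟩ := this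
  have hlt' : Fm.props φ ⊆ M.L t := by
    intro p hp
    exact hlt (by simpa [Fm.or, Fm.props] using hp)
  exact h t hlt'

/-- Gen* is validated by `A_i^*`: if `φ` is true at every world of `M` at which it is
defined, then `A_i^* φ ⇒ K_i φ` is true at every world at which it is defined. -/
theorem stmt19 {W : Type} (M : EAS W) (i : ℕ) (φ : Fm)
    (h : ∀ s : W, Fm.props φ ⊆ M.L s → M.sat s φ) :
    ∀ s : W, Fm.props φ ⊆ M.L s → M.sat s (Fm.imp (Fm.astar i φ) (.k i φ)) := by
  intro s hs
  have hq : Fm.qcount (Fm.imp (Fm.astar i φ) (.k i φ)) = Fm.qcount φ := by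
    simp [Fm.imp, Fm.or, Fm.astar, Fm.qcount]
  unfold EAS.sat
  rw [hq]
  have h' : ∀ t, Fm.props φ ⊆ M.L t → M.satN (Fm.qcount φ) t φ := h
  cases hn : Fm.qcount φ with
  | zero =>
    exact key19 M _ i φ (fun t ht => by simpa [EAS.satN, hn] using h' t ht) s hs
  | succ n =>
    exact key19 M _ i φ (fun t ht => by simpa [EAS.satN, hn] using h' t ht) s hs

end AwarenessPaper
end
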